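/- Let ω(z) = (z + a)/(1 + a z) with a ∈ (-1,1), and let h be analytic on the unit disk with h(z) + g(z) = z/(1-z) where g' = ω h'. Then the dilatation ω̃ of f_0 * (h + conj(g)), given by ω̃(z) = -z(ω(z)^2 + ω(z) - (1/2)ω'(z)z + (1/2)ω'(z))/(1 + ω(z) - (1/2)ω'(z)z + (1/2)ω'(z)z^2), simplifies to ω̃(z) = -z(z^2 + ((1+3a)/2)z + (1+a)/2)/(1 + ((1+3a)/2)z + ((1+a)/2)z^2), and |ω̃(z)| < 1 for all z in the open unit disk. -/

import Mathlib

lemma key_ineq (a : ℝ) (ha₁ : -1 < a) (ha₂ : a < 1) (z : ℂ) (hz : ‖z‖ < 1) :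
    ‖z ^ 2 + ((1 + 3 * (a : ℂ)) / 2) * z + (1 + (a : ℂ)) / 2‖
      < ‖1 + ((1 + 3 * (a : ℂ)) / 2) * z + ((1 + (a : ℂ)) / 2) * z ^ 2‖ := by
  have hs : z.re ^ 2 + z.im ^ 2 < 1 := by
    have : Complex.normSq z < 1 := by
      rw [Complex.normSq_eq_norm_sq]
      calc ‖z‖ ^ 2 < 1 ^ 2 := by
            apply pow_lt_pow_left₀ hz (norm_nonneg z)
            norm_num
        _ = 1 := one_pow 2
    simpa [Complex.normSq_apply, pow_two] using this
  have e1 : ((1 + 3 * (a : ℂ)) / 2) = (((1 + 3 * a) / 2 : ℝ) : ℂ) := by push_cast; ring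
  have e2 : ((1 + (a : ℂ)) / 2) = (((1 + a) / 2 : ℝ) : ℂ) := by push_cast; ring
  rw [e1, e2]
  apply lt_of_pow_lt_pow_left₀ 2 (norm_nonneg _)
  rw [Complex.sq_norm, Complex.sq_norm,
    Complex.normSq_apply, Complex.normSq_apply]
  set x := z.re
  set y := z.im
  simp only [Complex.add_re, Complex.add_im, Complex.mul_re, Complex.mul_im,
    Complex.one_re, Complex.one_im, Complex.ofReal_re, Complex.ofReal_im,
    pow_two, Complex.mul_re, Complex.mul_im]
  have hpos : (3 + a) / 2 * (1 + (x ^ 2 + y ^ 2)) + (1 + 3 * a) * x > 0 := by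
    nlinarith [sq_nonneg ((3 + a) * x + (1 + 3 * a)), sq_nonneg y,
      mul_pos (by linarith : (0:ℝ) < 1 - a) (by linarith : (0:ℝ) < 1 + a), sq_nonneg x]
  nlinarith [mul_pos (mul_pos (by linarith : (0:ℝ) < (1 - a) / 2)
      (by linarith : (0:ℝ) < 1 - (x ^ 2 + y ^ 2))) hpos]

/-- For `ω(z) = (z+a)/(1+az)` with `a ∈ (-1,1)`, the dilatation
`ω̃(z) = -z(ω² + (ω - (1/2)ω'z) + (1/2)ω')/(1 + (ω - (1/2)ω'z) + (1/2)ω'z²)` simplifies to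
`-z(z² + ((1+3a)/2)z + (1+a)/2)/(1 + ((1+3a)/2)z + ((1+a)/2)z²)` and has modulus `< 1`
on the open unit disk. -/
theorem dilatation_mobius (a : ℝ) (ha₁ : -1 < a) (ha₂ : a < 1) (ω : ℂ → ℂ)
    (hω : ∀ w : ℂ, ω w = (w + (a : ℂ)) / (1 + (a : ℂ) * w)) :
    ∀ z ∈ Metric.ball (0 : ℂ) 1,
      -z * ((ω z) ^ 2 + (ω z - (1 / 2) * deriv ω z * z) + (1 / 2) * deriv ω z)
          / (1 + (ω z - (1 / 2) * deriv ω z * z) + (1 / 2) * deriv ω z * z ^ 2)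
        = -z * (z ^ 2 + ((1 + 3 * (a : ℂ)) / 2) * z + (1 + (a : ℂ)) / 2)
          / (1 + ((1 + 3 * (a : ℂ)) / 2) * z + ((1 + (a : ℂ)) / 2) * z ^ 2) ∧
      ‖-z * ((ω z) ^ 2 + (ω z - (1 / 2) * deriv ω z * z) + (1 / 2) * deriv ω z)
          / (1 + (ω z - (1 / 2) * deriv ω z * z) + (1 / 2) * deriv ω z * z ^ 2)‖ < 1 := by
  intro z hz
  rw [Metric.mem_ball, dist_zero_right] at hz
  -- basic nonvanishing facts
  have hu : (1 : ℂ) + (a:ℂ) * z ≠ 0 := by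
    intro h
    have h1 : ‖(a:ℂ) * z‖ < 1 := by
      rw [norm_mul, Complex.norm_real]
      calc |a| * ‖z‖ ≤ 1 * ‖z‖ := by
            apply mul_le_mul_of_nonneg_right _ (norm_nonneg z)
            rw [abs_le]; constructor <;> linarith
        _ = ‖z‖ := one_mul _
        _ < 1 := hz
    have h2 : (a:ℂ) * z = -1 := by linear_combination h
    rw [h2] at h1
    simp at h1
  have hkey := key_ineq a ha₁ ha₂ z hz
  have hQ : (1 + ((1 + 3 * (a : ℂ)) / 2) * z + ((1 + (a : ℂ)) / 2) * z ^ 2) ≠ 0 := by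
    intro h
    rw [h] at hkey
    simp at hkey
    exact absurd hkey (norm_nonneg _).not_gt
  have ha : (1 : ℂ) + (a:ℂ) ≠ 0 := by
    intro h
    have : (1 : ℝ) + a = 0 := by exact_mod_cast h
    linarith
  -- derivative of ω
  have hderiv : deriv ω z = (1 - (a:ℂ)^2) / (1 + (a:ℂ) * z)^2 := by
    have h1 : HasDerivAt (fun w : ℂ => w + (a:ℂ)) 1 z := (hasDerivAt_id z).add_const _
    have h2 : HasDerivAt (fun w : ℂ => 1 + (a:ℂ) * w) (a:ℂ) z := by
      simpa using ((hasDerivAt_id z).const_mul (a:ℂ)).const_add 1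
    have h3 := h1.div h2 hu
    have hfun : ω = fun w : ℂ => (w + (a:ℂ)) / (1 + (a:ℂ) * w) := funext hω
    rw [hfun, show (fun w : ℂ => (w + (a:ℂ)) / (1 + (a:ℂ) * w)) = ((fun w : ℂ => w + (a:ℂ)) / fun w : ℂ => 1 + (a:ℂ) * w) from rfl, h3.deriv]
    field_simp
    ring
  have h1 : ω z * (1 + (a:ℂ) * z) = z + (a:ℂ) := by
    rw [hω z]; exact div_mul_cancel₀ _ hu
  have h2 : deriv ω z * (1 + (a:ℂ) * z) ^ 2 = 1 - (a:ℂ) ^ 2 := by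
    rw [hderiv]; exact div_mul_cancel₀ _ (pow_ne_zero 2 hu)
  have hNum' : ((ω z) ^ 2 + (ω z - (1 / 2) * deriv ω z * z) + (1 / 2) * deriv ω z)
        * (1 + (a:ℂ) * z) ^ 2
      = (1 + (a:ℂ)) * (z ^ 2 + ((1 + 3 * (a:ℂ)) / 2) * z + (1 + (a:ℂ)) / 2) := by
    linear_combination (ω z * (1 + (a:ℂ) * z) + z + (a:ℂ) + (1 + (a:ℂ) * z)) * h1
      + ((1 - z) / 2) * h2
  have hDen' : (1 + (ω z - (1 / 2) * deriv ω z * z) + (1 / 2) * deriv ω z * z ^ 2)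
        * (1 + (a:ℂ) * z) ^ 2
      = (1 + (a:ℂ)) * (1 + ((1 + 3 * (a:ℂ)) / 2) * z + ((1 + (a:ℂ)) / 2) * z ^ 2) := by
    linear_combination (1 + (a:ℂ) * z) * h1 + ((z ^ 2 - z) / 2) * h2
  have hD : 1 + (ω z - (1 / 2) * deriv ω z * z) + (1 / 2) * deriv ω z * z ^ 2 ≠ 0 := by
    intro h
    rw [h, zero_mul] at hDen'
    exact (mul_ne_zero ha hQ) hDen'.symm
  have heq : -z * ((ω z) ^ 2 + (ω z - (1 / 2) * deriv ω z * z) + (1 / 2) * deriv ω z)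
          / (1 + (ω z - (1 / 2) * deriv ω z * z) + (1 / 2) * deriv ω z * z ^ 2)
        = -z * (z ^ 2 + ((1 + 3 * (a : ℂ)) / 2) * z + (1 + (a : ℂ)) / 2)
          / (1 + ((1 + 3 * (a : ℂ)) / 2) * z + ((1 + (a : ℂ)) / 2) * z ^ 2) := by
    rw [div_eq_div_iff hD hQ]
    apply mul_left_cancel₀ (mul_ne_zero ha (pow_ne_zero 2 hu))
    linear_combination
      (-(1 + (a:ℂ)) * z * (1 + ((1 + 3 * (a:ℂ)) / 2) * z + ((1 + (a:ℂ)) / 2) * z ^ 2)) * hNum'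
      + ((1 + (a:ℂ)) * z * (z ^ 2 + ((1 + 3 * (a:ℂ)) / 2) * z + (1 + (a:ℂ)) / 2)) * hDen'
  refine ⟨heq, ?_⟩
  rw [heq, norm_div, norm_mul, norm_neg]
  rw [div_lt_one (norm_pos_iff.mpr hQ)]
  calc ‖z‖ * ‖z ^ 2 + ((1 + 3 * (a : ℂ)) / 2) * z + (1 + (a : ℂ)) / 2‖
      ≤ 1 * ‖z ^ 2 + ((1 + 3 * (a : ℂ)) / 2) * z + (1 + (a : ℂ)) / 2‖ := by
        apply mul_le_mul_of_nonneg_right hz.le (norm_nonneg _)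
    _ = ‖z ^ 2 + ((1 + 3 * (a : ℂ)) / 2) * z + (1 + (a : ℂ)) / 2‖ := one_mul _
    _ < _ := hkey
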